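/- arXiv:2107.14588 — 7 statements merged into one kernel-verified Lean document; each statement's English description precedes it below -/
import Mathlib

section
/- For every vector of link lengths a = (a_1,…,a_n) with all a_i > 0, every k with 1 ≤ k ≤ n, and all angle vectors α ∈ [0,2π)^k, β ∈ [0,π]^k, the norm of the endpoint satisfies max( 0 , R_k^min ) ≤ ‖f_{a,k}(α,β)‖ ≤ R_k^max, where R_k^min := max_{1≤i≤k} ( 2a_i − Σ_{j=1}^k a_j ) and R_k^max := Σ_{j=1}^k a_j. -/
open Real

/-- The `k`-th endpoint map of a spherical-joint kinematic chain with link lengths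
`a 1, …, a n` and joint angles `α j ∈ [0,2π)`, `β j ∈ [0,π]`. -/
noncomputable def chainEndpoint (a α β : ℕ → ℝ) (k : ℕ) : EuclideanSpace ℝ (Fin 3) :=
  ∑ j ∈ Finset.Icc 1 k, a j •
    (WithLp.equiv 2 (Fin 3 → ℝ)).symm
      ![Real.sin (β j) * Real.cos (α j), Real.sin (β j) * Real.sin (α j), Real.cos (β j)]

/-- `R_k^min = max_{1 ≤ i ≤ k} (2 a_i − Σ_{j=1}^k a_j)`. -/
noncomputable def Rmin (a : ℕ → ℝ) (k : ℕ) : ℝ :=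
  sSup ((fun i => 2 * a i - ∑ j ∈ Finset.Icc 1 k, a j) '' Set.Icc 1 k)

/-- `R_k^max = Σ_{j=1}^k a_j`. -/
noncomputable def Rmax (a : ℕ → ℝ) (k : ℕ) : ℝ :=
  ∑ j ∈ Finset.Icc 1 k, a j

lemma unit_norm (x y : ℝ) :
    ‖(WithLp.equiv 2 (Fin 3 → ℝ)).symm
      ![Real.sin y * Real.cos x, Real.sin y * Real.sin x, Real.cos y]‖ = 1 := by
  rw [EuclideanSpace.norm_eq]
  simp only [Real.norm_eq_abs, sq_abs]
  have : ∑ i : Fin 3, ((WithLp.equiv 2 (Fin 3 → ℝ)).symm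
      ![Real.sin y * Real.cos x, Real.sin y * Real.sin x, Real.cos y] i) ^ 2 = 1 := by
    simp [Fin.sum_univ_three]
    have h1 := Real.sin_sq_add_cos_sq x
    have h2 := Real.sin_sq_add_cos_sq y
    nlinarith
  rw [this, Real.sqrt_one]

/-- The norm of the endpoint of a kinematic chain with `k` links satisfies
`max(0, R_k^min) ≤ ‖f_{a,k}(α,β)‖ ≤ R_k^max`. -/
theorem chainEndpoint_norm_bounds
    (n : ℕ) (a : ℕ → ℝ) (ha : ∀ i, 1 ≤ i → i ≤ n → 0 < a i)
    (k : ℕ) (hk1 : 1 ≤ k) (hk2 : k ≤ n) (α β : ℕ → ℝ)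
    (hα : ∀ j, 1 ≤ j → j ≤ k → α j ∈ Set.Ico (0 : ℝ) (2 * π))
    (hβ : ∀ j, 1 ≤ j → j ≤ k → β j ∈ Set.Icc (0 : ℝ) π) :
    max 0 (Rmin a k) ≤ ‖chainEndpoint a α β k‖ ∧
      ‖chainEndpoint a α β k‖ ≤ Rmax a k := by
  set u : ℕ → EuclideanSpace ℝ (Fin 3) := fun j =>
    (WithLp.equiv 2 (Fin 3 → ℝ)).symm
      ![Real.sin (β j) * Real.cos (α j), Real.sin (β j) * Real.sin (α j), Real.cos (β j)]
  have hu : ∀ j, ‖u j‖ = 1 := fun j => unit_norm _ _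
  have hmem : ∀ j ∈ Finset.Icc 1 k, 0 < a j := by
    intro j hj
    rw [Finset.mem_Icc] at hj
    exact ha j hj.1 (hj.2.trans hk2)
  have hnorm_smul : ∀ j ∈ Finset.Icc 1 k, ‖a j • u j‖ = a j := by
    intro j hj
    rw [norm_smul, hu, mul_one, Real.norm_eq_abs, abs_of_pos (hmem j hj)]
  have hupper : ‖chainEndpoint a α β k‖ ≤ Rmax a k := by
    unfold chainEndpoint Rmax
    calc ‖∑ j ∈ Finset.Icc 1 k, a j • u j‖ ≤ ∑ j ∈ Finset.Icc 1 k, ‖a j • u j‖ :=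
          norm_sum_le _ _
      _ = ∑ j ∈ Finset.Icc 1 k, a j := Finset.sum_congr rfl hnorm_smul
  refine ⟨?_, hupper⟩
  rw [max_le_iff]
  refine ⟨norm_nonneg _, ?_⟩
  apply Real.sSup_le
  · rintro x ⟨i, hi, rfl⟩
    simp only [Set.mem_Icc] at hi
    have hiF : i ∈ Finset.Icc 1 k := Finset.mem_Icc.mpr hi
    -- a i ≤ ‖f‖ + ‖f - a i • u i‖ ≤ ‖f‖ + (S - a i)
    have hrest : ‖chainEndpoint a α β k - a i • u i‖ ≤
        (∑ j ∈ Finset.Icc 1 k, a j) - a i := by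
      have : chainEndpoint a α β k - a i • u i =
          ∑ j ∈ (Finset.Icc 1 k).erase i, a j • u j := by
        unfold chainEndpoint
        rw [← Finset.add_sum_erase _ _ hiF]
        ring_nf
        abel
      rw [this]
      calc ‖∑ j ∈ (Finset.Icc 1 k).erase i, a j • u j‖
          ≤ ∑ j ∈ (Finset.Icc 1 k).erase i, ‖a j • u j‖ := norm_sum_le _ _
        _ = ∑ j ∈ (Finset.Icc 1 k).erase i, a j :=
            Finset.sum_congr rfl fun j hj => hnorm_smul j (Finset.mem_of_mem_erase hj)
        _ = (∑ j ∈ Finset.Icc 1 k, a j) - a i := by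
            rw [Finset.sum_erase_eq_sub hiF]
    have hai : a i = ‖a i • u i‖ := (hnorm_smul i hiF).symm
    have htri : ‖a i • u i‖ ≤ ‖chainEndpoint a α β k‖ +
        ‖chainEndpoint a α β k - a i • u i‖ := by
      have := norm_sub_le (chainEndpoint a α β k) (chainEndpoint a α β k - a i • u i)
      simpa using this
    show 2 * a i - ∑ j ∈ Finset.Icc 1 k, a j ≤ ‖chainEndpoint a α β k‖
    linarith
  · exact norm_nonneg _
end

section
/- For every vector of link lengths a = (a_1,…,a_n) with all a_i > 0, every k with 1 ≤ k ≤ n, and every real number r with max( 0 , R_k^min ) ≤ r ≤ R_k^max, there exist angle vectors α ∈ [0,2π)^k and β ∈ [0,π]^k such that ‖f_{a,k}(α,β)‖ = r, where R_k^min := max_{1≤i≤k} ( 2a_i − Σ_{j=1}^k a_j ) and R_k^max := Σ_{j=1}^k a_j. In other words, the reachable distances from the origin of a spherical-joint kinematic chain with k links form exactly the interval [max(0,R_k^min), R_k^max]. -/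
open Real


lemma key_chain (k : ℕ) (hk0 : 1 ≤ k) : ∀ a : ℕ → ℝ, (∀ i, 1 ≤ i → i ≤ k → 0 < a i) →
    ∀ r : ℝ, 0 ≤ r → r ≤ ∑ j ∈ Finset.Icc 1 k, a j →
    (∀ i, 1 ≤ i → i ≤ k → 2 * a i ≤ (∑ j ∈ Finset.Icc 1 k, a j) + r) →
    ∃ φ : ℕ → ℝ, ∑ j ∈ Finset.Icc 1 k, (a j : ℂ) * Complex.exp (φ j * Complex.I) = (r : ℂ) := by
  induction k, hk0 using Nat.le_induction with
  | base =>
    intro a ha r hr0 hrS hmax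
    have h1 : Finset.Icc 1 1 = {1} := rfl
    rw [h1] at hrS ⊢
    simp only [Finset.sum_singleton] at hrS ⊢
    have h2 := hmax 1 le_rfl le_rfl
    rw [h1] at h2; simp only [Finset.sum_singleton] at h2
    have : r = a 1 := le_antisymm hrS (by linarith)
    refine ⟨fun _ => 0, ?_⟩
    simp [this]
  | succ k hk IH =>
    intro a ha r hr0 hrS hmax
    set c := a (k + 1) with hc
    set S' := ∑ j ∈ Finset.Icc 1 k, a j with hS'
    have hsum : ∑ j ∈ Finset.Icc 1 (k + 1), a j = S' + c :=
      Finset.sum_Icc_succ_top (by omega) a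
    rw [hsum] at hrS hmax
    have hcpos : 0 < c := ha (k+1) (by omega) le_rfl
    have hS'pos : 0 < S' := by
      have : ∀ j ∈ Finset.Icc 1 k, 0 < a j := fun j hj => by
        simp only [Finset.mem_Icc] at hj; exact ha j hj.1 (by omega)
      exact Finset.sum_pos this (Finset.nonempty_Icc.mpr hk)
    have haS' : ∀ i, 1 ≤ i → i ≤ k → a i ≤ S' := by
      intro i h1 h2
      exact Finset.single_le_sum (f := a) (fun j hj => by
        simp only [Finset.mem_Icc] at hj; exact (ha j hj.1 (by omega)).le)
        (Finset.mem_Icc.mpr ⟨h1, h2⟩)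
    have hne : (Finset.Icc 1 k).Nonempty := Finset.nonempty_Icc.mpr hk
    set X : ℝ := max |r - c| ((Finset.Icc 1 k).sup' hne (fun i => 2 * a i - S')) with hX
    set r' : ℝ := min S' X with hr'
    have hXub : X ≤ r + c := by
      apply max_le
      · rw [abs_sub_comm]; calc |c - r| ≤ |c| + |r| := abs_sub _ _
          _ = c + r := by rw [abs_of_pos hcpos, abs_of_nonneg hr0]
          _ = r + c := by ring
      · apply Finset.sup'_le
        intro i hi
        simp only [Finset.mem_Icc] at hi
        have := hmax i hi.1 (by omega)
        linarith
    have hr'0 : 0 ≤ r' := by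
      apply le_min hS'pos.le
      exact le_trans (abs_nonneg _) (le_max_left _ _)
    have hC : ∀ i, 1 ≤ i → i ≤ k → 2 * a i ≤ S' + r' := by
      intro i h1 h2
      have h3 : 2 * a i - S' ≤ r' := by
        apply le_min
        · linarith [haS' i h1 h2]
        · exact le_trans (Finset.le_sup' (fun i => 2 * a i - S') (Finset.mem_Icc.mpr ⟨h1, h2⟩)) (le_max_right _ _)
      linarith
    have hD1 : |r' - c| ≤ r := by
      rw [abs_le]
      constructor
      · -- c - r ≤ r'
        have : c - r ≤ r' := by
          apply le_min
          · have := hmax (k+1) (by omega) le_rfl; linarith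
          · exact le_trans (by rw [abs_sub_comm]; exact le_abs_self _) (le_max_left _ _)
        linarith
      · have h4 : r' ≤ X := min_le_right _ _
        linarith
    have hD2 : r ≤ r' + c := by
      have : r - c ≤ r' := by
        apply le_min
        · linarith
        · exact le_trans (le_abs_self _) (le_max_left _ _)
      linarith
    obtain ⟨φ₀, hφ₀⟩ := IH a (fun i h1 h2 => ha i h1 (by omega)) r' hr'0 (min_le_left _ _) hC
    -- IVT for the last link
    set h : ℝ → ℝ := fun θ => ‖(r' : ℂ) + (c : ℂ) * Complex.exp (θ * Complex.I)‖ with hh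
    have hcont : Continuous h := by
      exact continuous_norm.comp (continuous_const.add (continuous_const.mul
        (Complex.continuous_exp.comp (Complex.continuous_ofReal.mul continuous_const))))
    have hh0 : h 0 = r' + c := by
      simp only [hh]
      norm_num
      rw [← Complex.ofReal_add, Complex.norm_real, Real.norm_of_nonneg (by linarith)]
    have hhpi : h π = |r' - c| := by
      simp only [hh]
      rw [Complex.exp_pi_mul_I, mul_neg_one, ← Complex.ofReal_neg, ← Complex.ofReal_add,
        Complex.norm_real, ← sub_eq_add_neg, Real.norm_eq_abs]
    have hmem : r ∈ Set.Icc (h π) (h 0) := by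
      rw [hh0, hhpi]; exact ⟨hD1, hD2⟩
    obtain ⟨θ, hθmem, hθ⟩ := intermediate_value_Icc' (le_of_lt pi_pos) hcont.continuousOn hmem
    -- assemble
    set φ₁ : ℕ → ℝ := Function.update φ₀ (k+1) θ with hφ₁
    have hT : ∑ j ∈ Finset.Icc 1 (k + 1), (a j : ℂ) * Complex.exp (φ₁ j * Complex.I)
        = (r' : ℂ) + (c : ℂ) * Complex.exp (θ * Complex.I) := by
      rw [Finset.sum_Icc_succ_top (by omega)]
      have h5 : ∀ j ∈ Finset.Icc 1 k, (a j : ℂ) * Complex.exp (φ₁ j * Complex.I)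
          = (a j : ℂ) * Complex.exp (φ₀ j * Complex.I) := by
        intro j hj
        simp only [Finset.mem_Icc] at hj
        rw [hφ₁, Function.update_of_ne (by omega)]
      rw [Finset.sum_congr rfl h5, hφ₀, hφ₁, Function.update_self]
    set T : ℂ := (r' : ℂ) + (c : ℂ) * Complex.exp (θ * Complex.I) with hTdef
    have habsT : ‖T‖ = r := hθ
    refine ⟨fun j => φ₁ j - T.arg, ?_⟩
    have h6 : ∀ j, ((φ₁ j - T.arg : ℝ) : ℂ) * Complex.I = (φ₁ j : ℂ) * Complex.I - (T.arg : ℂ) * Complex.I := by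
      intro j; push_cast; ring
    calc ∑ j ∈ Finset.Icc 1 (k+1), (a j : ℂ) * Complex.exp ((φ₁ j - T.arg : ℝ) * Complex.I)
        = (∑ j ∈ Finset.Icc 1 (k+1), (a j : ℂ) * Complex.exp ((φ₁ j : ℝ) * Complex.I)) * Complex.exp (-(T.arg : ℂ) * Complex.I) := by
          rw [Finset.sum_mul]
          apply Finset.sum_congr rfl
          intro j _
          rw [h6 j, sub_eq_add_neg, Complex.exp_add, ← neg_mul]
          ring
      _ = T * Complex.exp (-(T.arg : ℂ) * Complex.I) := by rw [hT]
      _ = (r : ℂ) := by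
          have h7 : ((‖T‖ : ℝ) : ℂ) * Complex.exp ((T.arg : ℂ) * Complex.I) *
              Complex.exp (-(T.arg : ℂ) * Complex.I) = ((‖T‖ : ℝ) : ℂ) := by
            rw [mul_assoc, ← Complex.exp_add, neg_mul, add_neg_cancel, Complex.exp_zero, mul_one]
          rw [Complex.norm_mul_exp_arg_mul_I] at h7
          rw [h7, habsT]

/-- Every `r` with `max(0, R_k^min) ≤ r ≤ R_k^max` is a reachable distance from the
origin of a spherical-joint kinematic chain with `k` links: there are angle vectors
`α ∈ [0,2π)^k`, `β ∈ [0,π]^k` with `‖f_{a,k}(α,β)‖ = r`. -/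
theorem chainEndpoint_norm_surjective
    (n : ℕ) (a : ℕ → ℝ) (ha : ∀ i, 1 ≤ i → i ≤ n → 0 < a i)
    (k : ℕ) (hk1 : 1 ≤ k) (hk2 : k ≤ n) (r : ℝ)
    (hr1 : max 0 (Rmin a k) ≤ r) (hr2 : r ≤ Rmax a k) :
    ∃ α β : ℕ → ℝ,
      (∀ j, 1 ≤ j → j ≤ k → α j ∈ Set.Ico (0 : ℝ) (2 * π)) ∧
      (∀ j, 1 ≤ j → j ≤ k → β j ∈ Set.Icc (0 : ℝ) π) ∧
      ‖chainEndpoint a α β k‖ = r := by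
  have hr0 : 0 ≤ r := le_trans (le_max_left _ _) hr1
  have hrRmin : Rmin a k ≤ r := le_trans (le_max_right _ _) hr1
  have hbdd : BddAbove ((fun i => 2 * a i - ∑ j ∈ Finset.Icc 1 k, a j) '' Set.Icc 1 k) :=
    ((Set.finite_Icc 1 k).image _).bddAbove
  have hmaxle : ∀ i, 1 ≤ i → i ≤ k → 2 * a i ≤ (∑ j ∈ Finset.Icc 1 k, a j) + r := by
    intro i h1 h2
    have : 2 * a i - ∑ j ∈ Finset.Icc 1 k, a j ≤ Rmin a k :=
      le_csSup hbdd ⟨i, ⟨h1, h2⟩, rfl⟩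
    linarith
  obtain ⟨φ, hφ⟩ := key_chain k hk1 a (fun i h1 h2 => ha i h1 (le_trans h2 hk2)) r hr0 hr2 hmaxle
  -- real and imaginary parts
  have hre : ∑ j ∈ Finset.Icc 1 k, a j * Real.cos (φ j) = r := by
    have := congrArg Complex.re hφ
    simpa [Complex.re_sum, Complex.mul_re, Complex.exp_ofReal_mul_I_re,
      Complex.exp_ofReal_mul_I_im] using this
  have him : ∑ j ∈ Finset.Icc 1 k, a j * Real.sin (φ j) = 0 := by
    have := congrArg Complex.im hφ
    simpa [Complex.im_sum, Complex.mul_im, Complex.exp_ofReal_mul_I_re,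
      Complex.exp_ofReal_mul_I_im] using this
  -- reduce angles mod 2π
  set ψ : ℕ → ℝ := fun j => φ j - (⌊φ j / (2 * π)⌋ : ℤ) * (2 * π) with hψ
  have h2pi : (0:ℝ) < 2 * π := by positivity
  have hψ0 : ∀ j, 0 ≤ ψ j := fun j => Int.sub_floor_div_mul_nonneg (φ j) h2pi
  have hψlt : ∀ j, ψ j < 2 * π := fun j => Int.sub_floor_div_mul_lt (φ j) h2pi
  have hψcos : ∀ j, Real.cos (ψ j) = Real.cos (φ j) := fun j =>
    Real.cos_sub_int_mul_two_pi (φ j) _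
  have hψsin : ∀ j, Real.sin (ψ j) = Real.sin (φ j) := fun j =>
    Real.sin_sub_int_mul_two_pi (φ j) _
  set α : ℕ → ℝ := fun j => if ψ j ≤ π then 0 else π with hα
  set β : ℕ → ℝ := fun j => if ψ j ≤ π then ψ j else 2 * π - ψ j with hβ
  refine ⟨α, β, ?_, ?_, ?_⟩
  · intro j _ _
    simp only [hα]
    split
    · exact ⟨le_rfl, h2pi⟩
    · exact ⟨pi_pos.le, by linarith [pi_pos]⟩
  · intro j _ _
    simp only [hβ]
    split
    · exact ⟨hψ0 j, by assumption⟩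
    · constructor
      · linarith [hψlt j]
      · push_neg at *
        have : π < ψ j := by assumption
        linarith
  · -- the norm computation
    have hvec : ∀ j, Real.sin (β j) * Real.cos (α j) = Real.sin (φ j) ∧
        Real.sin (β j) * Real.sin (α j) = 0 ∧ Real.cos (β j) = Real.cos (φ j) := by
      intro j
      simp only [hα, hβ]
      split
      · simp [hψcos j, hψsin j]
      · rw [Real.sin_two_pi_sub, Real.cos_two_pi_sub]
        simp [hψcos j, hψsin j]
    have happ : ∀ i : Fin 3, (chainEndpoint a α β k) i
        = ∑ j ∈ Finset.Icc 1 k, a j *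
          (![Real.sin (β j) * Real.cos (α j), Real.sin (β j) * Real.sin (α j),
            Real.cos (β j)] i) := by
      intro i
      rw [chainEndpoint, WithLp.ofLp_sum, Finset.sum_apply]
      apply Finset.sum_congr rfl
      intro j _
      rfl
    have h0 : (chainEndpoint a α β k) 0 = 0 := by
      rw [happ 0]
      simp only [Matrix.cons_val_zero]
      rw [← him]
      exact Finset.sum_congr rfl fun j _ => by rw [(hvec j).1]
    have h1 : (chainEndpoint a α β k) 1 = 0 := by
      rw [happ 1]
      simp only [Matrix.cons_val_one, Matrix.head_cons, Matrix.cons_val_zero]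
      rw [show (0:ℝ) = ∑ j ∈ Finset.Icc 1 k, a j * 0 by simp]
      exact Finset.sum_congr rfl fun j _ => by rw [(hvec j).2.1]
    have h2 : (chainEndpoint a α β k) 2 = r := by
      rw [happ 2]
      simp only [Matrix.cons_val_two, Matrix.tail_cons, Matrix.head_cons]
      rw [← hre]
      exact Finset.sum_congr rfl fun j _ => by rw [(hvec j).2.2]
    rw [EuclideanSpace.norm_eq, Fin.sum_univ_three, h0, h1, h2]
    simp [Real.sqrt_sq hr0, abs_of_nonneg hr0]
end

section
/- (Chain reduction, forward direction.) Let a = (a_1,…,a_n) be link lengths with all a_i > 0 and n ≥ 4. If (α,β) ∈ M^{n-1} is a spherical configuration, i.e. ‖f_{a,n-1}(α,β)‖ = a_n, then its vector of diagonal lengths (L_2(α,β),…,L_{n-2}(α,β)) lies in the diagonal space DS(a). -/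
open Real

/-- Membership of a vector of diagonal lengths `(L_2, …, L_{n-2})` (encoded as a function
`L : ℕ → ℝ`, with the convention `L (n-1) = a n`) in the diagonal space `DS(a)`:
for every `1 ≤ k ≤ n−3` one has `|L_{n-k} − a_{n-k}| ≤ L_{n-k-1} ≤ L_{n-k} + a_{n-k}`
and `max(0, R_{n-k-1}^min) ≤ L_{n-k-1} ≤ R_{n-k-1}^max`. -/
def memDS (a : ℕ → ℝ) (n : ℕ) (L : ℕ → ℝ) : Prop :=
  ∀ k, 1 ≤ k → k ≤ n - 3 →
    |L (n - k) - a (n - k)| ≤ L (n - k - 1) ∧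
    L (n - k - 1) ≤ L (n - k) + a (n - k) ∧
    max 0 (Rmin a (n - k - 1)) ≤ L (n - k - 1) ∧
    L (n - k - 1) ≤ ∑ j ∈ Finset.Icc 1 (n - k - 1), a j

/-- The unit direction vector of the `j`-th link. -/
noncomputable def uvec (α β : ℕ → ℝ) (j : ℕ) : EuclideanSpace ℝ (Fin 3) :=
  (WithLp.equiv 2 (Fin 3 → ℝ)).symm
    ![Real.sin (β j) * Real.cos (α j), Real.sin (β j) * Real.sin (α j), Real.cos (β j)]

lemma norm_uvec (α β : ℕ → ℝ) (j : ℕ) : ‖uvec α β j‖ = 1 := by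
  rw [EuclideanSpace.norm_eq]
  have h : ∑ i : Fin 3, |uvec α β j i| ^ 2 = 1 := by
    simp only [uvec, Fin.sum_univ_three, WithLp.equiv_symm_apply, WithLp.ofLp_toLp,
      Matrix.cons_val_zero, Matrix.cons_val_one, Matrix.head_cons,
      Matrix.cons_val_two, Matrix.tail_cons, sq_abs]
    nlinarith [sin_sq_add_cos_sq (α j), sin_sq_add_cos_sq (β j)]
  rw [show ∀ x : EuclideanSpace ℝ (Fin 3), (∑ i, ‖x i‖ ^ 2) = ∑ i, |x i| ^ 2 from
    fun x => by simp [Real.norm_eq_abs], h, Real.sqrt_one]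

lemma chainEndpoint_eq (a α β : ℕ → ℝ) (k : ℕ) :
    chainEndpoint a α β k = ∑ j ∈ Finset.Icc 1 k, a j • uvec α β j := rfl

/-- Chain reduction, forward direction: if `(α,β) ∈ M^{n-1}` is a spherical configuration,
i.e. `‖f_{a,n-1}(α,β)‖ = a_n`, then its vector of diagonal lengths
`(L_2(α,β), …, L_{n-2}(α,β))`, `L_k(α,β) = ‖f_{a,k}(α,β)‖`, lies in the diagonal space. -/
theorem spherical_config_diagonals_mem_DS
    (n : ℕ) (hn : 4 ≤ n) (a : ℕ → ℝ) (ha : ∀ i, 1 ≤ i → i ≤ n → 0 < a i)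
    (α β : ℕ → ℝ)
    (hα : ∀ j, 1 ≤ j → j ≤ n - 1 → α j ∈ Set.Ico (0 : ℝ) (2 * π))
    (hβ : ∀ j, 1 ≤ j → j ≤ n - 1 → β j ∈ Set.Icc (0 : ℝ) π)
    (hclosed : ‖chainEndpoint a α β (n - 1)‖ = a n) :
    memDS a n (fun k => ‖chainEndpoint a α β k‖) := by
  intro k hk1 hk2
  have hkn : k + 3 ≤ n := by omega
  set m := n - k - 1 with hm
  have hnk : n - k = m + 1 := by omega
  have hm1 : 1 ≤ m := by omega
  have hmn : m + 1 ≤ n := by omega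
  have hnorm_a : ∀ j, 1 ≤ j → j ≤ n → ‖a j • uvec α β j‖ = a j := by
    intro j hj1 hj2
    rw [norm_smul, norm_uvec, mul_one, Real.norm_eq_abs, abs_of_pos (ha j hj1 hj2)]
  have hsum : chainEndpoint a α β (m + 1)
      = chainEndpoint a α β m + a (m + 1) • uvec α β (m + 1) := by
    rw [chainEndpoint_eq, chainEndpoint_eq,
      Finset.sum_Icc_succ_top (by omega : 1 ≤ m + 1)]
  have hxy : chainEndpoint a α β (m + 1) - a (m + 1) • uvec α β (m + 1)
      = chainEndpoint a α β m := by rw [hsum]; abel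
  have haux : ∀ s : Finset ℕ, (∀ j ∈ s, 1 ≤ j ∧ j ≤ n) →
      ‖∑ j ∈ s, a j • uvec α β j‖ ≤ ∑ j ∈ s, a j := by
    intro s hs
    calc ‖∑ j ∈ s, a j • uvec α β j‖ ≤ ∑ j ∈ s, ‖a j • uvec α β j‖ := norm_sum_le _ _
    _ = ∑ j ∈ s, a j := Finset.sum_congr rfl fun j hj =>
        hnorm_a j (hs j hj).1 (hs j hj).2
  simp only [hnk]
  refine ⟨?_, ?_, ?_, ?_⟩
  · have h := abs_norm_sub_norm_le (chainEndpoint a α β (m + 1))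
      (a (m + 1) • uvec α β (m + 1))
    rwa [hxy, hnorm_a (m + 1) (by omega) (by omega)] at h
  · have h := norm_sub_le (chainEndpoint a α β (m + 1)) (a (m + 1) • uvec α β (m + 1))
    rwa [hxy, hnorm_a (m + 1) (by omega) (by omega)] at h
  · refine max_le (norm_nonneg _) ?_
    refine csSup_le ⟨2 * a 1 - ∑ j ∈ Finset.Icc 1 m, a j, ⟨1, ⟨le_refl 1, hm1⟩, rfl⟩⟩ ?_
    rintro x ⟨i, ⟨hi1, hi2⟩, rfl⟩
    show 2 * a i - ∑ j ∈ Finset.Icc 1 m, a j ≤ ‖chainEndpoint a α β m‖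
    have hi : i ∈ Finset.Icc 1 m := Finset.mem_Icc.mpr ⟨hi1, hi2⟩
    have hsplit : a i • uvec α β i + ∑ j ∈ (Finset.Icc 1 m).erase i, a j • uvec α β j
        = chainEndpoint a α β m := by
      rw [chainEndpoint_eq]; exact Finset.add_sum_erase (Finset.Icc 1 m) (fun j => a j • uvec α β j) hi
    have hsplit' : a i • uvec α β i
        = chainEndpoint a α β m - ∑ j ∈ (Finset.Icc 1 m).erase i, a j • uvec α β j := by
      rw [← hsplit]; abel
    have h1 : a i ≤ ‖chainEndpoint a α β m‖
        + ‖∑ j ∈ (Finset.Icc 1 m).erase i, a j • uvec α β j‖ := by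
      rw [← hnorm_a i hi1 (by omega), hsplit']
      exact norm_sub_le _ _
    have h2 : ‖∑ j ∈ (Finset.Icc 1 m).erase i, a j • uvec α β j‖
        ≤ ∑ j ∈ (Finset.Icc 1 m).erase i, a j := by
      refine haux _ fun j hj => ?_
      have := Finset.mem_Icc.mp (Finset.mem_of_mem_erase hj)
      exact ⟨this.1, by omega⟩
    have h3 : a i + ∑ j ∈ (Finset.Icc 1 m).erase i, a j = ∑ j ∈ Finset.Icc 1 m, a j :=
      Finset.add_sum_erase _ _ hi
    linarith
  · rw [chainEndpoint_eq]
    refine haux _ fun j hj => ?_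
    have := Finset.mem_Icc.mp hj
    exact ⟨this.1, by omega⟩
end

section
/- (Chain reduction, converse direction.) Let a = (a_1,…,a_n) be link lengths with all a_i > 0 and n ≥ 4. For every vector (L_2,…,L_{n-2}) in the diagonal space DS(a) there exist angle vectors α ∈ [0,2π)^{n-1}, β ∈ [0,π]^{n-1} such that ‖f_{a,n-1}(α,β)‖ = a_n and ‖f_{a,k}(α_1,…,α_k,β_1,…,β_k)‖ = L_k for every 2 ≤ k ≤ n−2; that is, every feasible diagonal vector is realized by a spherical configuration of the closed kinematic chain. -/
open Real

noncomputable def nextPt (p : ℝ × ℝ) (r t : ℝ) : ℝ × ℝ :=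
  if p = (0,0) then (t, 0)
  else
    ((p.1^2+p.2^2 + t^2 - r^2)/(2*(p.1^2+p.2^2)) * p.1
       - Real.sqrt (t^2/(p.1^2+p.2^2) - ((p.1^2+p.2^2 + t^2 - r^2)/(2*(p.1^2+p.2^2)))^2) * p.2,
     (p.1^2+p.2^2 + t^2 - r^2)/(2*(p.1^2+p.2^2)) * p.2
       + Real.sqrt (t^2/(p.1^2+p.2^2) - ((p.1^2+p.2^2 + t^2 - r^2)/(2*(p.1^2+p.2^2)))^2) * p.1)

lemma nextPt_spec (p : ℝ × ℝ) (r t s : ℝ) (hs : p.1^2+p.2^2 = s^2) (hs0 : 0 ≤ s)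
    (hr : 0 ≤ r) (h1 : |s - r| ≤ t) (h2 : t ≤ s + r) :
    (nextPt p r t).1^2 + (nextPt p r t).2^2 = t^2 ∧
    ((nextPt p r t).1 - p.1)^2 + ((nextPt p r t).2 - p.2)^2 = r^2 := by
  have ht0 : 0 ≤ t := le_trans (abs_nonneg _) h1
  by_cases hp : p = (0,0)
  · have hp1 : p.1 = 0 := by rw [hp]
    have hp2 : p.2 = 0 := by rw [hp]
    have hs' : s = 0 := by nlinarith [sq_nonneg s]
    have htr : t = r := by
      rw [hs', zero_sub, abs_neg, abs_of_nonneg hr] at h1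
      rw [hs', zero_add] at h2
      linarith
    simp only [nextPt, if_pos hp, hp1, hp2]
    constructor <;> nlinarith
  · have hs2pos : 0 < p.1^2 + p.2^2 := by
      rcases lt_or_eq_of_le (by positivity : (0:ℝ) ≤ p.1^2 + p.2^2) with h | h
      · exact h
      · exfalso; apply hp
        have h1' : p.1 = 0 := by nlinarith [sq_nonneg p.1, sq_nonneg p.2]
        have h2' : p.2 = 0 := by nlinarith [sq_nonneg p.1, sq_nonneg p.2]
        exact Prod.ext h1' h2'
    set s2 := p.1^2 + p.2^2 with hs2def
    have hspos : 0 < s := by nlinarith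
    set c := (s2 + t^2 - r^2)/(2*s2) with hc
    have hf1 : 0 ≤ s + t - r := by
      have := abs_le.mp h1; linarith [this.2]
    have hf3 : 0 ≤ r - s + t := by
      have := abs_le.mp h1; linarith [this.1]
    have hf4 : 0 ≤ r + s - t := by linarith
    have hf2 : 0 ≤ s + t + r := by linarith
    have key : (s2 + t^2 - r^2)^2 ≤ 4 * t^2 * s2 := by
      have hprod : 0 ≤ (s + t - r) * (s + t + r) * (r - s + t) * (r + s - t) :=
        mul_nonneg (mul_nonneg (mul_nonneg hf1 hf2) hf3) hf4
      nlinarith [hs]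
    have hE : (0:ℝ) ≤ t^2/s2 - c^2 := by
      rw [sub_nonneg, hc, div_pow, div_le_div_iff₀ (by positivity) hs2pos]
      nlinarith
    have hd : Real.sqrt (t^2/s2 - c^2) ^ 2 = t^2/s2 - c^2 := Real.sq_sqrt hE
    simp only [nextPt, if_neg hp]
    have hs2ne : s2 ≠ 0 := ne_of_gt hs2pos
    constructor
    · have expand : (c * p.1 - Real.sqrt (t^2/s2 - c^2) * p.2)^2
          + (c * p.2 + Real.sqrt (t^2/s2 - c^2) * p.1)^2
          = (c^2 + Real.sqrt (t^2/s2 - c^2)^2) * s2 := by rw [hs2def]; ring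
      rw [expand, hd]; field_simp; ring
    · have expand : (c * p.1 - Real.sqrt (t^2/s2 - c^2) * p.2 - p.1)^2
          + (c * p.2 + Real.sqrt (t^2/s2 - c^2) * p.1 - p.2)^2
          = (c^2 + Real.sqrt (t^2/s2 - c^2)^2) * s2 - 2 * c * s2 + s2 := by rw [hs2def]; ring
      rw [expand, hd, hc]; field_simp; ring

noncomputable def chainPts (a L : ℕ → ℝ) : ℕ → ℝ × ℝ
  | 0 => (0, 0)
  | k+1 => nextPt (chainPts a L k) (a (k+1)) (L (k+1))

noncomputable def Lfull (a L : ℕ → ℝ) (k : ℕ) : ℝ :=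
  if k = 0 then 0 else if k = 1 then a 1 else L k

lemma norm3 (x y z : ℝ) :
    ‖(WithLp.equiv 2 (Fin 3 → ℝ)).symm ![x,y,z]‖ = Real.sqrt (x^2+y^2+z^2) := by
  rw [EuclideanSpace.norm_eq]
  congr 1
  rw [Fin.sum_univ_three]
  simp [WithLp.equiv_symm_apply, PiLp.toLp_apply, Real.norm_eq_abs, sq_abs]

lemma vec_lemma (dx dz aj αv βv : ℝ) (haj : 0 < aj) (hlen : dx^2+dz^2 = aj^2)
    (hα : αv = if 0 ≤ dx then 0 else π) (hβ : βv = Real.arccos (dz/aj)) :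
    aj • (WithLp.equiv 2 (Fin 3 → ℝ)).symm
        ![Real.sin βv * Real.cos αv, Real.sin βv * Real.sin αv, Real.cos βv]
      = (WithLp.equiv 2 (Fin 3 → ℝ)).symm ![dx, 0, dz] := by
  subst hα hβ
  have hne : aj ≠ 0 := ne_of_gt haj
  have habs : |dz| ≤ aj := by
    nlinarith [sq_abs dz, sq_nonneg dx, abs_nonneg dz]
  have hab := abs_le.mp habs
  have h1 : -1 ≤ dz/aj := by rw [le_div_iff₀ haj]; linarith [hab.1]
  have h2 : dz/aj ≤ 1 := by rw [div_le_one haj]; linarith [hab.2]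
  have hcos : Real.cos (Real.arccos (dz/aj)) = dz/aj := Real.cos_arccos h1 h2
  have hsin : Real.sin (Real.arccos (dz/aj)) = |dx|/aj := by
    rw [Real.sin_arccos,
      show 1 - (dz/aj)^2 = (|dx|/aj)^2 by
        rw [div_pow, div_pow, sq_abs]; field_simp; nlinarith [hlen]]
    exact Real.sqrt_sq (by positivity)
  rw [WithLp.equiv_symm_apply, ← WithLp.toLp_smul]
  congr 1
  funext i
  fin_cases i
  · show aj • (Real.sin _ * Real.cos _) = dx
    by_cases h : 0 ≤ dx
    · simp only [if_pos h, Real.cos_zero, hsin, smul_eq_mul, abs_of_nonneg h]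
      field_simp
    · simp only [if_neg h, Real.cos_pi, hsin, smul_eq_mul, abs_of_neg (not_le.mp h)]
      field_simp
  · show aj • (Real.sin _ * Real.sin _) = 0
    by_cases h : 0 ≤ dx
    · simp [if_pos h]
    · simp [if_neg h]
  · show aj • Real.cos _ = dz
    rw [hcos, smul_eq_mul]
    field_simp

/-- Chain reduction, converse direction: every vector `(L_2, …, L_{n-2})` in the diagonal
space `DS(a)` is realized by a spherical configuration of the closed kinematic chain:
there are angles `α ∈ [0,2π)^{n-1}`, `β ∈ [0,π]^{n-1}` with `‖f_{a,n-1}(α,β)‖ = a_n` and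
`‖f_{a,k}(α,β)‖ = L_k` for all `2 ≤ k ≤ n−2`. -/
theorem DS_realized_by_spherical_config
    (n : ℕ) (hn : 4 ≤ n) (a : ℕ → ℝ) (ha : ∀ i, 1 ≤ i → i ≤ n → 0 < a i)
    (L : ℕ → ℝ) (hLtop : L (n - 1) = a n) (hL : memDS a n L) :
    ∃ α β : ℕ → ℝ,
      (∀ j, 1 ≤ j → j ≤ n - 1 → α j ∈ Set.Ico (0 : ℝ) (2 * π)) ∧
      (∀ j, 1 ≤ j → j ≤ n - 1 → β j ∈ Set.Icc (0 : ℝ) π) ∧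
      ‖chainEndpoint a α β (n - 1)‖ = a n ∧
      ∀ k, 2 ≤ k → k ≤ n - 2 → ‖chainEndpoint a α β k‖ = L k := by
  set Lf : ℕ → ℝ := Lfull a L with hLfdef
  set P : ℕ → ℝ × ℝ := chainPts a Lf with hPdef
  have hLf0 : Lf 0 = 0 := rfl
  have hLf1 : Lf 1 = a 1 := rfl
  have hLfk : ∀ k, 2 ≤ k → Lf k = L k := by
    intro k hk
    simp only [hLfdef, Lfull]
    rw [if_neg (by omega), if_neg (by omega)]
  -- sum over Icc 1 2
  have hsum2 : ∑ j ∈ Finset.Icc 1 2, a j = a 1 + a 2 := by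
    rw [show Finset.Icc 1 2 = {1, 2} from by decide]
    simp
  -- the triangle inequalities
  have tri : ∀ k, k ≤ n - 2 →
      |Lf k - a (k+1)| ≤ Lf (k+1) ∧ Lf (k+1) ≤ Lf k + a (k+1) := by
    intro k hk
    match k with
    | 0 =>
      have h1 : 0 < a 1 := ha 1 le_rfl (by omega)
      rw [hLf0, hLf1]
      constructor
      · rw [zero_sub, abs_neg, abs_of_nonneg h1.le]
      · linarith
    | 1 =>
      have h := hL (n - 3) (by omega) le_rfl
      rw [show n - (n-3) - 1 = 2 from by omega] at h
      obtain ⟨-, -, h3, h4⟩ := h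
      rw [hsum2] at h4
      have hRm : Rmin a 2 = |a 1 - a 2| := by
        unfold Rmin
        rw [show Set.Icc (1:ℕ) 2 = {1, 2} from by ext x; simp; omega,
          Set.image_insert_eq, Set.image_singleton, csSup_pair, hsum2,
          abs_eq_max_neg]
        congr 1 <;> ring
      rw [hLf1, hLfk 2 le_rfl]
      constructor
      · calc |a 1 - a 2| = Rmin a 2 := hRm.symm
          _ ≤ max 0 (Rmin a 2) := le_max_right _ _
          _ ≤ L 2 := h3
      · exact h4
    | (k+2) =>
      have h := hL (n - (k+2) - 1) (by omega) (by omega)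
      rw [show n - (n - (k+2) - 1) = k + 3 from by omega] at h
      rw [show k + 3 - 1 = k + 2 from by omega] at h
      obtain ⟨h1', h2', -, -⟩ := h
      have hab := abs_le.mp h1'
      rw [hLfk (k+2) (by omega), hLfk (k+3) (by omega)]
      constructor
      · rw [abs_le]; constructor <;> linarith [hab.1, hab.2]
      · linarith [hab.1]
  -- the invariant
  have inv : ∀ k, k ≤ n - 1 → (P k).1^2 + (P k).2^2 = (Lf k)^2 ∧ 0 ≤ Lf k := by
    intro k
    induction k with
    | zero => intro _; refine ⟨?_, le_refl 0⟩; rw [hLf0]; norm_num [hPdef, chainPts]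
    | succ k ih =>
      intro hk
      obtain ⟨ihn, ihnn⟩ := ih (by omega)
      obtain ⟨t1, t2⟩ := tri k (by omega)
      have haj : 0 < a (k+1) := ha (k+1) (by omega) (by omega)
      have spec := nextPt_spec (P k) (a (k+1)) (Lf (k+1)) (Lf k) ihn ihnn haj.le t1 t2
      exact ⟨spec.1, le_trans (abs_nonneg _) t1⟩
  -- link lengths
  have link : ∀ k, k + 1 ≤ n - 1 →
      ((P (k+1)).1 - (P k).1)^2 + ((P (k+1)).2 - (P k).2)^2 = (a (k+1))^2 := by
    intro k hk
    obtain ⟨ihn, ihnn⟩ := inv k (by omega)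
    obtain ⟨t1, t2⟩ := tri k (by omega)
    have haj : 0 < a (k+1) := ha (k+1) (by omega) (by omega)
    exact (nextPt_spec (P k) (a (k+1)) (Lf (k+1)) (Lf k) ihn ihnn haj.le t1 t2).2
  refine ⟨fun j => if 0 ≤ (P j).1 - (P (j-1)).1 then 0 else π,
          fun j => Real.arccos (((P j).2 - (P (j-1)).2) / a j), ?_, ?_, ?_, ?_⟩
  · intro j _ _
    show (if 0 ≤ (P j).1 - (P (j-1)).1 then (0:ℝ) else π) ∈ Set.Ico (0:ℝ) (2*π)
    by_cases h : 0 ≤ (P j).1 - (P (j-1)).1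
    · rw [if_pos h]; exact ⟨le_rfl, by positivity⟩
    · rw [if_neg h]; exact ⟨Real.pi_pos.le, by linarith [Real.pi_pos]⟩
  · intro j _ _
    exact ⟨Real.arccos_nonneg _, Real.arccos_le_pi _⟩
  all_goals {
    have key : ∀ k, k ≤ n - 1 →
        chainEndpoint a (fun j => if 0 ≤ (P j).1 - (P (j-1)).1 then 0 else π)
          (fun j => Real.arccos (((P j).2 - (P (j-1)).2) / a j)) k
          = (WithLp.equiv 2 (Fin 3 → ℝ)).symm ![(P k).1, 0, (P k).2] := by
      intro k
      induction k with
      | zero =>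
        intro _
        have hz : ![(0:ℝ), 0, 0] = (0 : Fin 3 → ℝ) := by
          funext i; fin_cases i <;> rfl
        show (0 : EuclideanSpace ℝ (Fin 3)) = _
        · rw [show (P 0).1 = 0 from rfl, show (P 0).2 = 0 from rfl, hz,
            WithLp.equiv_symm_apply, WithLp.toLp_zero]
      | succ k ih =>
        intro hk
        have haj : 0 < a (k+1) := ha (k+1) (by omega) (by omega)
        have hstep : chainEndpoint a (fun j => if 0 ≤ (P j).1 - (P (j-1)).1 then 0 else π)
            (fun j => Real.arccos (((P j).2 - (P (j-1)).2) / a j)) (k+1)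
            = chainEndpoint a (fun j => if 0 ≤ (P j).1 - (P (j-1)).1 then 0 else π)
                (fun j => Real.arccos (((P j).2 - (P (j-1)).2) / a j)) k
              + a (k+1) • (WithLp.equiv 2 (Fin 3 → ℝ)).symm
                ![Real.sin (Real.arccos (((P (k+1)).2 - (P k).2) / a (k+1)))
                    * Real.cos (if 0 ≤ (P (k+1)).1 - (P k).1 then 0 else π),
                  Real.sin (Real.arccos (((P (k+1)).2 - (P k).2) / a (k+1)))
                    * Real.sin (if 0 ≤ (P (k+1)).1 - (P k).1 then 0 else π),
                  Real.cos (Real.arccos (((P (k+1)).2 - (P k).2) / a (k+1)))] := by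
          unfold chainEndpoint
          exact Finset.sum_Icc_succ_top (by omega) _
        rw [hstep, ih (by omega),
          vec_lemma ((P (k+1)).1 - (P k).1) ((P (k+1)).2 - (P k).2) (a (k+1)) _ _
            haj (link k hk) rfl rfl,
          WithLp.equiv_symm_apply, ← WithLp.toLp_add]
        congr 1
        funext i
        fin_cases i
        · show (P k).1 + ((P (k+1)).1 - (P k).1) = (P (k+1)).1; ring
        · show (0:ℝ) + 0 = 0; ring
        · show (P k).2 + ((P (k+1)).2 - (P k).2) = (P (k+1)).2; ring
    have hnorm : ∀ k, k ≤ n - 1 →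
        ‖chainEndpoint a (fun j => if 0 ≤ (P j).1 - (P (j-1)).1 then 0 else π)
          (fun j => Real.arccos (((P j).2 - (P (j-1)).2) / a j)) k‖ = Lf k := by
      intro k hk
      obtain ⟨hsq, hnn⟩ := inv k hk
      rw [key k hk, norm3,
        show (P k).1^2 + 0^2 + (P k).2^2 = (Lf k)^2 from by rw [← hsq]; ring]
      exact Real.sqrt_sq hnn
    first
    | (rw [hnorm (n-1) le_rfl, hLfk (n-1) (by omega), hLtop])
    | (intro k h2 h3
       rw [hnorm k (by omega), hLfk k h2])
  }
end

section
/- (Transformation of variables.) Let a = (a_1,…,a_n) with all a_i > 0 and n ≥ 4, let (L_2,…,L_{n-2}) ∈ ℝ_{≥0}^{n-3}, set L_{n-1} := a_n, and define U_{n-k-1} := L_{n-k-1}² − a_{n-k}² − L_{n-k}² for 1 ≤ k ≤ n−3. If the nested inequalities |L_{n-k} − a_{n-k}| ≤ L_{n-k-1} ≤ L_{n-k} + a_{n-k} hold for all 1 ≤ k ≤ n−3 (i.e. (L_2,…,L_{n-2}) ∈ P(a)), then for all 1 ≤ k ≤ n−3 one has | U_{n-k-1} | ≤ 2 a_{n-k}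 √( Σ_{j=n-k}^{n-2} U_j + Σ_{j=n-k+1}^{n} a_j² ), and in particular each argument of the square root is nonnegative. -/
/-- Transformation of variables: if `(L_2, …, L_{n-2}) ∈ ℝ_{≥0}^{n-3}` satisfies, with
`L_{n-1} := a_n`, the nested inequalities `|L_{n-k} − a_{n-k}| ≤ L_{n-k-1} ≤ L_{n-k} + a_{n-k}`
for `1 ≤ k ≤ n−3` (i.e. lies in the polytope `P(a)`), then the transformed variables
`U_{n-k-1} := L_{n-k-1}² − a_{n-k}² − L_{n-k}²` satisfy, for all `1 ≤ k ≤ n−3`,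
`|U_{n-k-1}| ≤ 2 a_{n-k} √(Σ_{j=n-k}^{n-2} U_j + Σ_{j=n-k+1}^{n} a_j²)`, each square-root
argument being nonnegative. -/
theorem transformation_of_variables
    (n : ℕ) (hn : 4 ≤ n) (a : ℕ → ℝ) (ha : ∀ i, 1 ≤ i → i ≤ n → 0 < a i)
    (L U : ℕ → ℝ)
    (hL0 : ∀ k, 2 ≤ k → k ≤ n - 2 → 0 ≤ L k)
    (hLtop : L (n - 1) = a n)
    (hU : ∀ j, 2 ≤ j → j ≤ n - 2 → U j = L j ^ 2 - a (j + 1) ^ 2 - L (j + 1) ^ 2)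
    (hP : ∀ k, 1 ≤ k → k ≤ n - 3 →
      |L (n - k) - a (n - k)| ≤ L (n - k - 1) ∧
      L (n - k - 1) ≤ L (n - k) + a (n - k)) :
    ∀ k, 1 ≤ k → k ≤ n - 3 →
      0 ≤ (∑ j ∈ Finset.Icc (n - k) (n - 2), U j) + ∑ j ∈ Finset.Icc (n - k + 1) n, a j ^ 2 ∧
      |U (n - k - 1)| ≤ 2 * a (n - k) *
        Real.sqrt ((∑ j ∈ Finset.Icc (n - k) (n - 2), U j) +
          ∑ j ∈ Finset.Icc (n - k + 1) n, a j ^ 2) := by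
  have hL0' : ∀ m, 2 ≤ m → m ≤ n - 1 → 0 ≤ L m := by
    intro m hm2 hm
    rcases eq_or_lt_of_le hm with h | h
    · rw [h, hLtop]; exact (ha n (by omega) le_rfl).le
    · exact hL0 m hm2 (by omega)
  have key : ∀ d m, m + d = n - 1 → 2 ≤ m →
      (∑ j ∈ Finset.Icc m (n - 2), U j) + ∑ j ∈ Finset.Icc (m + 1) n, a j ^ 2 = L m ^ 2 := by
    intro d
    induction d with
    | zero =>
      intro m hmd hm2
      have hm' : m = n - 1 := by omega
      subst hm'
      rw [Finset.Icc_eq_empty (by omega), Finset.sum_empty]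
      have h1 : n - 1 + 1 = n := by omega
      rw [h1, Finset.Icc_self, Finset.sum_singleton, hLtop]
      ring
    | succ d ih =>
      intro m hmd hm2
      have hmn : m ≤ n - 2 := by omega
      have h1 : Finset.Icc m (n - 2) = insert m (Finset.Icc (m + 1) (n - 2)) := by
        ext x; simp [Finset.mem_Icc]; omega
      have h2 : Finset.Icc (m + 1) n = insert (m + 1) (Finset.Icc (m + 2) n) := by
        ext x; simp [Finset.mem_Icc]; omega
      rw [h1, Finset.sum_insert (by simp), h2, Finset.sum_insert (by simp [Finset.mem_Icc])]
      have hih := ih (m + 1) (by omega) (by omega)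
      rw [hU m hm2 hmn]
      linarith
  intro k hk1 hk2
  have hsum := key (k - 1) (n - k) (by omega) (by omega)
  have hLm : 0 ≤ L (n - k) := hL0' _ (by omega) (by omega)
  refine ⟨by rw [hsum]; positivity, ?_⟩
  rw [hsum, Real.sqrt_sq hLm]
  have hU' := hU (n - k - 1) (by omega) (by omega)
  have hidx : n - k - 1 + 1 = n - k := by omega
  rw [hidx] at hU'
  obtain ⟨h1, h2⟩ := hP k hk1 hk2
  have hL' : 0 ≤ L (n - k - 1) := hL0 _ (by omega) (by omega)
  have ha' : 0 < a (n - k) := ha _ (by omega) (by omega)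
  have hsq1 : (L (n - k) - a (n - k)) ^ 2 ≤ L (n - k - 1) ^ 2 := by
    nlinarith [sq_abs (L (n - k) - a (n - k)), abs_nonneg (L (n - k) - a (n - k))]
  have hsq2 : L (n - k - 1) ^ 2 ≤ (L (n - k) + a (n - k)) ^ 2 := by nlinarith
  rw [hU', abs_le]
  constructor <;> nlinarith
end

section
/- (The parametrization map Γ lands in the transformed polytope.) Let a = (a_1,…,a_n) with all a_i > 0 and n ≥ 4. Define recursively, for s = (s_2,…,s_{n-2}) ∈ [−1,1]^{n-3}: Γ_{n-2}(s) := 2 s_{n-2} a_{n-1} a_n, and for 2 ≤ k ≤ n−3, Γ_{n-k-1}(s) := s_{n-k-1} · 2 a_{n-k} √( Σ_{j=n-k}^{n-2} Γ_j(s) + Σ_{j=n-k+1}^{n} a_j² ). Then for every s ∈ [−1,1]^{n-3}: (i) every square-root argument Σ_{j=n-k}^{n-2} Γ_j(s) + Σ_{j=n-k+1}^{n} a_j² is nonnegative, and (ii) Γ(s) := (Γ_2(s),…,Γ_{n-2}(s)) ∈ PU(a), i.e. | Γ_{n-k-1}(s) | ≤ 2 a_{n-k} √( Σ_{j=n-k}^{n-2}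 Γ_j(s) + Σ_{j=n-k+1}^{n} a_j² ) for all 1 ≤ k ≤ n−3. -/
/-- The parametrization map `Γ` lands in the transformed polytope `PU(a)`: let
`G : ℕ → ℝ` satisfy the recursion `G_{n-2} = 2 s_{n-2} a_{n-1} a_n` and, for
`2 ≤ k ≤ n−3`,
`G_{n-k-1} = s_{n-k-1} · 2 a_{n-k} √(Σ_{j=n-k}^{n-2} G_j + Σ_{j=n-k+1}^{n} a_j²)`
for parameters `s ∈ [−1,1]^{n-3}`. Then for all `1 ≤ k ≤ n−3` the square-root argument
`Σ_{j=n-k}^{n-2} G_j + Σ_{j=n-k+1}^{n} a_j²` is nonnegative and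
`|G_{n-k-1}| ≤ 2 a_{n-k} √(Σ_{j=n-k}^{n-2} G_j + Σ_{j=n-k+1}^{n} a_j²)`, i.e.
`Γ(s) = (G_2, …, G_{n-2}) ∈ PU(a)`. -/
theorem Gamma_mem_PU
    (n : ℕ) (hn : 4 ≤ n) (a : ℕ → ℝ) (ha : ∀ i, 1 ≤ i → i ≤ n → 0 < a i)
    (s : ℕ → ℝ) (hs : ∀ j, 2 ≤ j → j ≤ n - 2 → s j ∈ Set.Icc (-1 : ℝ) 1)
    (G : ℕ → ℝ)
    (hGtop : G (n - 2) = 2 * s (n - 2) * a (n - 1) * a n)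
    (hGrec : ∀ k, 2 ≤ k → k ≤ n - 3 →
      G (n - k - 1) = s (n - k - 1) * (2 * a (n - k) *
        Real.sqrt ((∑ j ∈ Finset.Icc (n - k) (n - 2), G j) +
          ∑ j ∈ Finset.Icc (n - k + 1) n, a j ^ 2))) :
    ∀ k, 1 ≤ k → k ≤ n - 3 →
      0 ≤ (∑ j ∈ Finset.Icc (n - k) (n - 2), G j) + ∑ j ∈ Finset.Icc (n - k + 1) n, a j ^ 2 ∧
      |G (n - k - 1)| ≤ 2 * a (n - k) *
        Real.sqrt ((∑ j ∈ Finset.Icc (n - k) (n - 2), G j) +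
          ∑ j ∈ Finset.Icc (n - k + 1) n, a j ^ 2) := by
  intro k hk1
  induction k, hk1 using Nat.le_induction with
  | base =>
    intro _
    have h1 : Finset.Icc (n - 1) (n - 2) = ∅ := Finset.Icc_eq_empty (by omega)
    have h2 : Finset.Icc (n - 1 + 1) n = {n} := by
      have : n - 1 + 1 = n := by omega
      rw [this, Finset.Icc_self]
    rw [h1, h2]
    simp only [Finset.sum_empty, Finset.sum_singleton, zero_add]
    have han : 0 < a n := ha n (by omega) le_rfl
    have han1 : 0 < a (n - 1) := ha (n - 1) (by omega) (by omega)
    have hsq : Real.sqrt (a n ^ 2) = a n := Real.sqrt_sq han.le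
    have hsmem := hs (n - 2) (by omega) le_rfl
    obtain ⟨hsl, hsu⟩ := hsmem
    constructor
    · positivity
    · have hidx : n - 1 - 1 = n - 2 := by omega
      rw [hidx, hGtop, hsq]
      have : |2 * s (n - 2) * a (n - 1) * a n| = |s (n - 2)| * (2 * a (n - 1) * a n) := by
        rw [abs_mul, abs_mul, abs_mul, abs_of_pos han, abs_of_pos han1,
          abs_of_nonneg (by norm_num : (0:ℝ) ≤ 2)]
        ring
      rw [this]
      have hsabs : |s (n - 2)| ≤ 1 := abs_le.mpr ⟨hsl, hsu⟩
      nlinarith [mul_pos han1 han]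
  | succ k hk ih =>
    intro hk3
    obtain ⟨hR, hG⟩ := ih (by omega)
    have hm1 : n - (k + 1) = n - k - 1 := by omega
    have hm2 : n - (k + 1) + 1 = n - k := by omega
    have hle1 : n - k - 1 ≤ n - 2 := by omega
    have hle2 : n - k ≤ n := by omega
    have hsum1 : (∑ j ∈ Finset.Icc (n - (k+1)) (n - 2), G j)
        = G (n - k - 1) + ∑ j ∈ Finset.Icc (n - k) (n - 2), G j := by
      rw [hm1]
      have : Finset.Icc (n - k - 1) (n - 2) = insert (n - k - 1) (Finset.Ioc (n - k - 1) (n - 2)) :=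
        (Finset.Ioc_insert_left hle1).symm
      rw [this, Finset.sum_insert Finset.left_notMem_Ioc]
      rw [← Finset.Icc_add_one_left_eq_Ioc]
      have hx : n - k - 1 + 1 = n - k := by omega
      rw [hx]
    have hsum2 : (∑ j ∈ Finset.Icc (n - (k+1) + 1) n, a j ^ 2)
        = a (n - k) ^ 2 + ∑ j ∈ Finset.Icc (n - k + 1) n, a j ^ 2 := by
      rw [hm2]
      have : Finset.Icc (n - k) n = insert (n - k) (Finset.Ioc (n - k) n) :=
        (Finset.Ioc_insert_left hle2).symm
      rw [this, Finset.sum_insert Finset.left_notMem_Ioc]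
      congr 1
      rw [← Finset.Icc_add_one_left_eq_Ioc]
    set S := ∑ j ∈ Finset.Icc (n - k) (n - 2), G j with hS
    set T := ∑ j ∈ Finset.Icc (n - k + 1) n, a j ^ 2 with hT
    have hank : 0 < a (n - k) := ha (n - k) (by omega) (by omega)
    have hsqrt := Real.sq_sqrt hR
    have hsqrt0 := Real.sqrt_nonneg (S + T)
    have hGlb : -(2 * a (n - k) * Real.sqrt (S + T)) ≤ G (n - k - 1) := by
      have := neg_abs_le (G (n - k - 1))
      linarith
    have hnewR : 0 ≤ (∑ j ∈ Finset.Icc (n - (k+1)) (n - 2), G j)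
        + ∑ j ∈ Finset.Icc (n - (k+1) + 1) n, a j ^ 2 := by
      rw [hsum1, hsum2]
      nlinarith [sq_nonneg (Real.sqrt (S + T) - a (n - k))]
    refine ⟨hnewR, ?_⟩
    have hrec := hGrec (k + 1) (by omega) hk3
    rw [hrec]
    have hank1 : 0 < a (n - (k + 1)) := ha (n - (k+1)) (by omega) (by omega)
    have hsmem := hs (n - (k + 1) - 1) (by omega) (by omega)
    obtain ⟨hsl, hsu⟩ := hsmem
    have hsabs : |s (n - (k+1) - 1)| ≤ 1 := abs_le.mpr ⟨hsl, hsu⟩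
    rw [abs_mul]
    have hpos : 0 ≤ 2 * a (n - (k+1)) * Real.sqrt
        ((∑ j ∈ Finset.Icc (n - (k+1)) (n - 2), G j) + ∑ j ∈ Finset.Icc (n - (k+1) + 1) n, a j ^ 2) := by
      positivity
    calc |s (n - (k+1) - 1)| * |2 * a (n - (k+1)) * Real.sqrt _|
        = |s (n - (k+1) - 1)| * (2 * a (n - (k+1)) * Real.sqrt _) := by rw [abs_of_nonneg hpos]
      _ ≤ 1 * (2 * a (n - (k+1)) * Real.sqrt _) := by
          apply mul_le_mul_of_nonneg_right hsabs hpos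
      _ = _ := one_mul _
end

section
/- (Surjectivity of the parametrization Γ.) Let a = (a_1,…,a_n) with all a_i > 0 and n ≥ 4, and let Γ : [−1,1]^{n-3} → ℝ^{n-3} be defined recursively by Γ_{n-2}(s) := 2 s_{n-2} a_{n-1} a_n and Γ_{n-k-1}(s) := s_{n-k-1} · 2 a_{n-k} √( Σ_{j=n-k}^{n-2} Γ_j(s) + Σ_{j=n-k+1}^{n} a_j² ) for 2 ≤ k ≤ n−3. Then for every U ∈ PU(a) there exists s ∈ [−1,1]^{n-3} with Γ(s) = U; hence the image of Γ equals PU(a). -/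
/-- Surjectivity of the parametrization `Γ`: for every `U` in the transformed polytope
`PU(a)` (i.e. `|U_{n-k-1}| ≤ 2 a_{n-k} √(Σ_{j=n-k}^{n-2} U_j + Σ_{j=n-k+1}^{n} a_j²)` for
all `1 ≤ k ≤ n−3`) there exists a parameter vector `s ∈ [−1,1]^{n-3}` such that the
function `G` defined by the recursion `G_{n-2} = 2 s_{n-2} a_{n-1} a_n` and
`G_{n-k-1} = s_{n-k-1} · 2 a_{n-k} √(Σ_{j=n-k}^{n-2} G_j + Σ_{j=n-k+1}^{n} a_j²)`
(for `2 ≤ k ≤ n−3`) agrees with `U` on the indices `2, …, n−2`; hence the image of `Γ`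
equals `PU(a)`. -/
theorem Gamma_surjective_onto_PU
    (n : ℕ) (hn : 4 ≤ n) (a : ℕ → ℝ) (ha : ∀ i, 1 ≤ i → i ≤ n → 0 < a i)
    (U : ℕ → ℝ)
    (hU : ∀ k, 1 ≤ k → k ≤ n - 3 →
      |U (n - k - 1)| ≤ 2 * a (n - k) *
        Real.sqrt ((∑ j ∈ Finset.Icc (n - k) (n - 2), U j) +
          ∑ j ∈ Finset.Icc (n - k + 1) n, a j ^ 2)) :
    ∃ s : ℕ → ℝ,
      (∀ j, 2 ≤ j → j ≤ n - 2 → s j ∈ Set.Icc (-1 : ℝ) 1) ∧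
      ∃ G : ℕ → ℝ,
        G (n - 2) = 2 * s (n - 2) * a (n - 1) * a n ∧
        (∀ k, 2 ≤ k → k ≤ n - 3 →
          G (n - k - 1) = s (n - k - 1) * (2 * a (n - k) *
            Real.sqrt ((∑ j ∈ Finset.Icc (n - k) (n - 2), G j) +
              ∑ j ∈ Finset.Icc (n - k + 1) n, a j ^ 2))) ∧
        (∀ j, 2 ≤ j → j ≤ n - 2 → G j = U j) := by
  classical
  set D : ℕ → ℝ := fun j => 2 * a (j + 1) *
      Real.sqrt ((∑ i ∈ Finset.Icc (j + 1) (n - 2), U i) +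
        ∑ i ∈ Finset.Icc (j + 2) n, a i ^ 2) with hDdef
  have hDnn : ∀ j, j + 1 ≤ n → 0 ≤ D j := by
    intro j hj
    have := ha (j + 1) (by omega) hj
    have := Real.sqrt_nonneg ((∑ i ∈ Finset.Icc (j + 1) (n - 2), U i) +
        ∑ i ∈ Finset.Icc (j + 2) n, a i ^ 2)
    simp only [hDdef]
    positivity
  have key : ∀ j, 2 ≤ j → j ≤ n - 2 → |U j| ≤ D j := by
    intro j h2 hle
    have h1 : 1 ≤ n - 1 - j := by omega
    have h2' : n - 1 - j ≤ n - 3 := by omega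
    have h := hU (n - 1 - j) h1 h2'
    have e1 : n - (n - 1 - j) - 1 = j := by omega
    have e2 : n - (n - 1 - j) = j + 1 := by omega
    have e3 : n - (n - 1 - j) + 1 = j + 2 := by omega
    rw [e3, e1, e2] at h
    exact h
  have hmul : ∀ j, 2 ≤ j → j ≤ n - 2 → (U j / D j) * D j = U j := by
    intro j h2 hle
    rcases eq_or_lt_of_le (hDnn j (by omega)) with h0 | hpos
    · have : |U j| ≤ 0 := (key j h2 hle).trans_eq h0.symm
      have hU0 : U j = 0 := abs_nonpos_iff.mp this
      simp [hU0]
    · exact div_mul_cancel₀ _ hpos.ne'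
  refine ⟨fun j => U j / D j, ?_, U, ?_, ?_, fun j _ _ => rfl⟩
  · intro j h2 hle
    show U j / D j ∈ Set.Icc (-1 : ℝ) 1
    rcases eq_or_lt_of_le (hDnn j (by omega)) with h0 | hpos
    · rw [← h0]
      norm_num
    · rw [Set.mem_Icc, ← abs_le, abs_div, abs_of_pos hpos]
      exact (div_le_one hpos).mpr (key j h2 hle)
  · -- G (n-2) = 2 * s (n-2) * a (n-1) * a n
    have e1 : n - 2 + 1 = n - 1 := by omega
    have e2 : n - 2 + 2 = n := by omega
    have hDval : D (n - 2) = 2 * a (n - 1) * a n := by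
      simp only [hDdef, e1, e2]
      rw [Finset.Icc_eq_empty (by omega), Finset.Icc_self, Finset.sum_singleton,
        Finset.sum_empty, zero_add, Real.sqrt_sq (ha n (by omega) le_rfl).le]
    have := hmul (n - 2) (by omega) le_rfl
    rw [hDval] at this
    calc U (n - 2) = U (n - 2) / (2 * a (n - 1) * a n) * (2 * a (n - 1) * a n) := this.symm
      _ = 2 * (U (n - 2) / D (n - 2)) * a (n - 1) * a n := by rw [hDval]; ring
  · intro k hk2 hk3
    obtain ⟨j, e1, e2, e3, hj2, hjle⟩ :
        ∃ j, n - k - 1 = j ∧ n - k = j + 1 ∧ n - k + 1 = j + 2 ∧ 2 ≤ j ∧ j ≤ n - 2 :=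
      ⟨n - k - 1, rfl, by omega, by omega, by omega, by omega⟩
    rw [e3, e1, e2]
    exact (hmul j hj2 hjle).symm
end
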